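/- Suppose θ*_i = 0 for every i = 1,…,k_θ (i.e. every parsimonious-model key coefficient is zero). Then θ₀ = 0, and moreover all the parsimonious nuisance coefficients δ*_{(i)} coincide and equal δ₀. -/

import Mathlib

open MeasureTheory ProbabilityTheory Real

private lemma memLp_mul_integrable {α : Type*} [MeasurableSpace α] {μ : Measure α}
    {f g : α → ℝ} (hf : MemLp f 2 μ) (hg : MemLp g 2 μ) :
    Integrable (fun x => f x * g x) μ := by
  have h := L2.integrable_inner (𝕜 := ℝ) (hf.toLp f) (hg.toLp g)
  refine h.congr ?_
  filter_upwards [hf.coeFn_toLp, hg.coeFn_toLp] with x hx hy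
  simp [hx, hy, RCLike.inner_apply, mul_comm]

private lemma expand_integral {α ι : Type*} [MeasurableSpace α] [Fintype ι]
    (μ : Measure α) (y f : α → ℝ) (g : ι → α → ℝ) (c : ι → ℝ)
    (hyf : Integrable (fun ω => y ω * f ω) μ)
    (hgf : ∀ a, Integrable (fun ω => g a ω * f ω) μ) :
    ∫ ω, (y ω - ∑ a, c a * g a ω) * f ω ∂μ
      = ∫ ω, y ω * f ω ∂μ - ∑ a, c a * ∫ ω, g a ω * f ω ∂μ := by
  have hpt : ∀ ω, (y ω - ∑ a, c a * g a ω) * f ω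
      = y ω * f ω - ∑ a, c a * (g a ω * f ω) := by
    intro ω
    rw [sub_mul, Finset.sum_mul]
    congr 1
    exact Finset.sum_congr rfl fun a _ => by ring
  simp_rw [hpt]
  rw [integral_sub hyf (integrable_finset_sum _ fun a _ => ((hgf a).const_mul (c a))),
    integral_finset_sum _ fun a _ => ((hgf a).const_mul (c a))]
  simp [MeasureTheory.integral_const_mul]

private lemma posdef_zero {n : Type*} [Fintype n] {G : Matrix n n ℝ}
    (hG : G.PosDef) {D : n → ℝ} (hq : dotProduct D (G.mulVec D) = 0) :
    D = 0 := by
  by_contra hD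
  have h := hG.dotProduct_mulVec_pos hD
  simp only [star_trivial] at h
  rw [hq] at h
  exact lt_irrefl 0 h

/-- In the linear projection setting (full model with regressors
`x = (x_δ', x_θ')'`, positive definite Gram matrix `E[xx']`, full-projection
coefficients `(δ₀, θ₀)` solving `E[(y − δ₀'x_δ − θ₀'x_θ)x] = 0`, and for each
`i` parsimonious coefficients `(δ* i, θ* i)` solving
`E[(y − (δ* i)'x_δ − (θ* i)·x_{θ,i})x_{(i)}] = 0`): if `θ* i = 0` for every `i`,
then `θ₀ = 0` and all parsimonious nuisance coefficients coincide: `δ* i = δ₀`. -/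
theorem theta0_zero_of_parsimonious_zero
    {Ω : Type*} [MeasurableSpace Ω] (P : Measure Ω) [IsProbabilityMeasure P]
    (kδ kθ : ℕ)
    (y : Ω → ℝ) (xδ : Ω → Fin kδ → ℝ) (xθ : Ω → Fin kθ → ℝ)
    (hymeas : Measurable y)
    (hxδmeas : ∀ j, Measurable fun ω => xδ ω j)
    (hxθmeas : ∀ i, Measurable fun ω => xθ ω i)
    -- finite second moments
    (hy2 : MemLp y 2 P)
    (hxδ2 : ∀ j, MemLp (fun ω => xδ ω j) 2 P)
    (hxθ2 : ∀ i, MemLp (fun ω => xθ ω i) 2 P)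
    -- E[xx'] is positive definite
    (hGram : Matrix.PosDef (Matrix.of fun j j' : Fin kδ ⊕ Fin kθ =>
      ∫ ω, Sum.elim (xδ ω) (xθ ω) j * Sum.elim (xδ ω) (xθ ω) j' ∂P))
    -- full projection coefficients β₀ = (δ₀', θ₀')' : E[(y − β₀'x)x] = 0
    (δ0 : Fin kδ → ℝ) (θ0 : Fin kθ → ℝ)
    (hβ0δ : ∀ j : Fin kδ,
      ∫ ω, (y ω - ∑ a, δ0 a * xδ ω a - ∑ b, θ0 b * xθ ω b) * xδ ω j ∂P = 0)
    (hβ0θ : ∀ i : Fin kθ,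
      ∫ ω, (y ω - ∑ a, δ0 a * xδ ω a - ∑ b, θ0 b * xθ ω b) * xθ ω i ∂P = 0)
    -- parsimonious coefficients β*_{(i)} = (δ*_{(i)}', θ*_i)' :
    -- E[(y − β*_{(i)}'x_{(i)})x_{(i)}] = 0
    (δs : Fin kθ → Fin kδ → ℝ) (θs : Fin kθ → ℝ)
    (hβsδ : ∀ i, ∀ j : Fin kδ,
      ∫ ω, (y ω - ∑ a, δs i a * xδ ω a - θs i * xθ ω i) * xδ ω j ∂P = 0)
    (hβsθ : ∀ i,
      ∫ ω, (y ω - ∑ a, δs i a * xδ ω a - θs i * xθ ω i) * xθ ω i ∂P = 0)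
    -- hypothesis: θ*_i = 0 for every i
    (h0 : ∀ i, θs i = 0) :
    θ0 = 0 ∧ ∀ i, δs i = δ0 := by
  classical
  set x : Ω → (Fin kδ ⊕ Fin kθ) → ℝ := fun ω => Sum.elim (xδ ω) (xθ ω) with hx
  have hx2 : ∀ s, MemLp (fun ω => x ω s) 2 P := by
    rintro (j | i)
    · exact hxδ2 j
    · exact hxθ2 i
  set G : Matrix (Fin kδ ⊕ Fin kθ) (Fin kδ ⊕ Fin kθ) ℝ :=
    Matrix.of fun j j' => ∫ ω, x ω j * x ω j' ∂P with hG
  have hint : ∀ s t, Integrable (fun ω => x ω s * x ω t) P :=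
    fun s t => memLp_mul_integrable (hx2 s) (hx2 t)
  have hyint : ∀ s, Integrable (fun ω => y ω * x ω s) P :=
    fun s => memLp_mul_integrable hy2 (hx2 s)
  set Y : (Fin kδ ⊕ Fin kθ) → ℝ := fun s => ∫ ω, y ω * x ω s ∂P with hY
  set β0 : (Fin kδ ⊕ Fin kθ) → ℝ := Sum.elim δ0 θ0 with hβ0
  -- full model moment equations
  have hFull : ∀ s, Y s = ∑ t, β0 t * G t s := by
    intro s
    have hres : ∀ ω, (y ω - ∑ a, δ0 a * xδ ω a - ∑ b, θ0 b * xθ ω b)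
        = y ω - ∑ t, β0 t * x ω t := by
      intro ω
      rw [Fintype.sum_sum_type]
      simp [hβ0, hx, sub_sub]
    have hexp := expand_integral P y (fun ω => x ω s) (fun t ω => x ω t) β0
      (hyint s) (fun t => hint t s)
    have heq : ∫ ω, (y ω - ∑ t, β0 t * x ω t) * x ω s ∂P = 0 := by
      cases s with
      | inl j => rw [show (fun ω => (y ω - ∑ t, β0 t * x ω t) * x ω (Sum.inl j))
          = fun ω => (y ω - ∑ a, δ0 a * xδ ω a - ∑ b, θ0 b * xθ ω b) * xδ ω j from
            funext fun ω => by rw [hres ω]; rfl]; exact hβ0δ j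
      | inr i => rw [show (fun ω => (y ω - ∑ t, β0 t * x ω t) * x ω (Sum.inr i))
          = fun ω => (y ω - ∑ a, δ0 a * xδ ω a - ∑ b, θ0 b * xθ ω b) * xθ ω i from
            funext fun ω => by rw [hres ω]; rfl]; exact hβ0θ i
    rw [hexp] at heq
    have : Y s - ∑ t, β0 t * G t s = 0 := heq
    linarith [this]
  -- parsimonious moment equations (θs i = 0)
  have hParsδ : ∀ i j, Y (Sum.inl j) = ∑ a, δs i a * G (Sum.inl a) (Sum.inl j) := by
    intro i j
    have h := hβsδ i j
    rw [h0 i] at h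
    simp only [zero_mul, sub_zero] at h
    have hexp := expand_integral P y (fun ω => xδ ω j) (fun a ω => xδ ω a) (δs i)
      (hyint (Sum.inl j)) (fun a => hint (Sum.inl a) (Sum.inl j))
    rw [hexp] at h
    exact sub_eq_zero.mp h
  have hParsθ : ∀ i, Y (Sum.inr i) = ∑ a, δs i a * G (Sum.inl a) (Sum.inr i) := by
    intro i
    have h := hβsθ i
    rw [h0 i] at h
    simp only [zero_mul, sub_zero] at h
    have hexp := expand_integral P y (fun ω => xθ ω i) (fun a ω => xδ ω a) (δs i)
      (hyint (Sum.inr i)) (fun a => hint (Sum.inl a) (Sum.inr i))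
    rw [hexp] at h
    exact sub_eq_zero.mp h
  have hGsymm : ∀ s t, G s t = G t s := by
    intro s t
    simp only [hG, Matrix.of_apply]
    exact integral_congr_ae (Filter.Eventually.of_forall fun ω => mul_comm _ _)
  -- Step A : all δs coincide
  have hstepA : ∀ i i', δs i = δs i' := by
    intro i i'
    set d : Fin kδ → ℝ := fun a => δs i a - δs i' a with hd
    have hdz : ∀ j, ∑ a, d a * G (Sum.inl a) (Sum.inl j) = 0 := by
      intro j
      have h1 := hParsδ i j
      have h2 := hParsδ i' j
      have : ∑ a, d a * G (Sum.inl a) (Sum.inl j)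
          = (∑ a, δs i a * G (Sum.inl a) (Sum.inl j))
            - ∑ a, δs i' a * G (Sum.inl a) (Sum.inl j) := by
        rw [← Finset.sum_sub_distrib]
        exact Finset.sum_congr rfl fun a _ => by simp [hd, sub_mul]
      rw [this, ← h1, ← h2, sub_self]
    set D : (Fin kδ ⊕ Fin kθ) → ℝ := Sum.elim d 0 with hD
    have hq : dotProduct D (G.mulVec D) = 0 := by
      simp only [dotProduct, Matrix.mulVec, dotProduct]
      rw [Fintype.sum_sum_type]
      have hz2 : ∑ b : Fin kθ, D (Sum.inr b) * ∑ t, G (Sum.inr b) t * D t = 0 := by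
        apply Finset.sum_eq_zero; intro b _; simp [hD]
      rw [hz2, add_zero]
      apply Finset.sum_eq_zero
      intro j _
      have hinner : ∑ t, G (Sum.inl j) t * D t = ∑ a, G (Sum.inl j) (Sum.inl a) * d a := by
        rw [Fintype.sum_sum_type]
        have : ∑ b : Fin kθ, G (Sum.inl j) (Sum.inr b) * D (Sum.inr b) = 0 := by
          apply Finset.sum_eq_zero; intro b _; simp [hD]
        simp [this, hD]
      rw [hinner]
      have : ∑ a, G (Sum.inl j) (Sum.inl a) * d a
          = ∑ a, d a * G (Sum.inl a) (Sum.inl j) := by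
        exact Finset.sum_congr rfl fun a _ => by rw [hGsymm, mul_comm]
      rw [this, hdz j, mul_zero]
    have hD0 := posdef_zero hGram hq
    funext a
    have := congrFun hD0 (Sum.inl a)
    simp [hD, hd] at this
    linarith [this]
  -- Step B : β0 = Sum.elim (δs i) 0
  have hstepB : ∀ i : Fin kθ, β0 = Sum.elim (δs i) (0 : Fin kθ → ℝ) := by
    intro i
    set β2 : (Fin kδ ⊕ Fin kθ) → ℝ := Sum.elim (δs i) 0 with hβ2
    have hβ2eq : ∀ s, ∑ t, β2 t * G t s = ∑ a, δs i a * G (Sum.inl a) s := by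
      intro s
      rw [Fintype.sum_sum_type]
      have : ∑ b : Fin kθ, β2 (Sum.inr b) * G (Sum.inr b) s = 0 := by
        apply Finset.sum_eq_zero; intro b _; simp [hβ2]
      simp [this, hβ2]
    have hfull2 : ∀ s, Y s = ∑ t, β2 t * G t s := by
      rintro (j | b)
      · rw [hβ2eq]; exact hParsδ i j
      · rw [hβ2eq]
        rw [hParsθ b]
        exact Finset.sum_congr rfl fun a _ => by rw [hstepA b i]
    set D : (Fin kδ ⊕ Fin kθ) → ℝ := fun t => β0 t - β2 t with hD
    have hdz : ∀ s, ∑ t, D t * G t s = 0 := by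
      intro s
      have : ∑ t, D t * G t s = (∑ t, β0 t * G t s) - ∑ t, β2 t * G t s := by
        rw [← Finset.sum_sub_distrib]
        exact Finset.sum_congr rfl fun t _ => by simp [hD, sub_mul]
      rw [this, ← hFull s, ← hfull2 s, sub_self]
    have hq : dotProduct D (G.mulVec D) = 0 := by
      simp only [dotProduct, Matrix.mulVec, dotProduct]
      have hswap : ∑ s, D s * ∑ t, G s t * D t = ∑ t, (∑ s, D s * G s t) * D t := by
        simp_rw [Finset.mul_sum, Finset.sum_mul]
        rw [Finset.sum_comm]
        exact Finset.sum_congr rfl fun t _ => Finset.sum_congr rfl fun s _ => by ring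
      rw [hswap]
      apply Finset.sum_eq_zero
      intro t _
      rw [hdz t, zero_mul]
    have hD0 := posdef_zero hGram hq
    funext s
    have := congrFun hD0 s
    simp only [hD, Pi.zero_apply] at this
    linarith [this]
  constructor
  · funext b
    have := congrFun (hstepB b) (Sum.inr b)
    simpa [hβ0] using this
  · intro i
    funext a
    have := congrFun (hstepB i) (Sum.inl a)
    simp [hβ0] at this
    exact this.symm
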